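/- Let X and Y be complex Banach spaces, let (T(t))_{t≥0} be a strongly continuous semigroup on X that is bounded by a constant M ≥ 1, let C : X → Y and Q : X → X be bounded linear operators with T(t)Q = QT(t) for all t ≥ 0, and let 1 ≤ p < ∞. Suppose there exist constants K, τ > 0 such that ‖Qx‖^p ≤ K ∫₀^τ ‖C T(t)x‖^p dt for all x ∈ X, and that ∫₀^∞ ‖C T(t)x‖^p dt ≤ ‖x‖^p for all x ∈ X. Then ‖T(t)Qx‖ ≤ (Kτ)^{1/p} M² t^{−1/p} ‖x‖ for all t > 0 and all x ∈ X; in particular the operator norm of T(t)Q is O(t^{−1/p}) as t → ∞. -/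

import Mathlib

open MeasureTheory Filter Topology

set_option maxHeartbeats 1000000 in
/-- observability plus an integrated observation bound yield the
polynomial decay rate `‖T(t)Q‖ ≤ (Kτ)^{1/p} M² t^{-1/p}`. -/
theorem stmt11 {X Y : Type*} [NormedAddCommGroup X] [NormedSpace ℂ X] [CompleteSpace X]
    [NormedAddCommGroup Y] [NormedSpace ℂ Y] [CompleteSpace Y]
    (T : ℝ → X →L[ℂ] X) (M : ℝ) (hM : 1 ≤ M)
    (hT0 : T 0 = 1)
    (hTadd : ∀ s t : ℝ, 0 ≤ s → 0 ≤ t → T (s + t) = (T s) ∘L (T t))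
    (hTcont : ∀ x : X, ContinuousOn (fun t : ℝ => T t x) (Set.Ici (0 : ℝ)))
    (hTbdd : ∀ t : ℝ, 0 ≤ t → ‖T t‖ ≤ M)
    (C : X →L[ℂ] Y) (Q : X →L[ℂ] X)
    (hQ : ∀ t : ℝ, 0 ≤ t → (T t) ∘L Q = Q ∘L (T t))
    (p : ℝ) (hp : 1 ≤ p)
    (K τ : ℝ) (hK : 0 < K) (hτ : 0 < τ)
    (hobs : ∀ x : X, ‖Q x‖ ^ p ≤ K * ∫ t in (0 : ℝ)..τ, ‖C (T t x)‖ ^ p)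
    (hintC : ∀ x : X,
      ∫⁻ t in Set.Ioi (0 : ℝ), ENNReal.ofReal (‖C (T t x)‖ ^ p)
        ≤ ENNReal.ofReal (‖x‖ ^ p)) :
    ∀ t : ℝ, 0 < t → ∀ x : X,
      ‖T t (Q x)‖ ≤ (K * τ) ^ (1 / p) * M ^ 2 * t ^ (-(1 / p)) * ‖x‖ := by
  intro t ht x
  have hp0 : (0:ℝ) < p := lt_of_lt_of_le one_pos hp
  have hM0 : (0:ℝ) < M := lt_of_lt_of_le one_pos hM
  -- the (everywhere-defined, measurable) observation density
  set G : ℝ → ENNReal := fun r => ENNReal.ofReal (‖C (T (max r 0) x)‖ ^ p) with hGdef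
  have hTx : Continuous fun r : ℝ => T (max r 0) x := by
    apply (hTcont x).comp_continuous (continuous_id.max continuous_const)
    intro r; exact Set.mem_Ici.2 (le_max_right _ _)
  have hGmeas : Measurable G := by
    apply ENNReal.measurable_ofReal.comp
    exact ((C.continuous.comp hTx).norm.rpow_const fun _ => Or.inr hp0.le).measurable
  -- number of windows
  set n : ℕ := Nat.floor (t / τ) + 1 with hn
  have hnpos : 0 < n := Nat.succ_pos _
  have hnR : t / τ < (n : ℝ) := by
    simpa [hn] using Nat.lt_floor_add_one (t / τ)
  have hnRpos : (0:ℝ) < n := by positivity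
  have hkt : ∀ k : ℕ, k < n → (k : ℝ) * τ ≤ t := by
    intro k hk
    have hk' : k ≤ Nat.floor (t / τ) := Nat.lt_succ_iff.mp hk
    have h1 : (k : ℝ) ≤ t / τ := by
      calc (k : ℝ) ≤ (Nat.floor (t / τ) : ℝ) := by exact_mod_cast hk'
        _ ≤ t / τ := Nat.floor_le (by positivity)
    calc (k : ℝ) * τ ≤ (t / τ) * τ := by nlinarith
      _ = t := div_mul_cancel₀ t hτ.ne'
  -- window integrals
  set W : ℕ → ENNReal := fun k => ∫⁻ r in Set.Ioc ((k:ℝ) * τ) ((k:ℝ) * τ + τ), G r with hWdef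
  have hsum : ∀ m : ℕ, ∑ k ∈ Finset.range m, W k = ∫⁻ r in Set.Ioc (0:ℝ) (m * τ), G r := by
    intro m
    induction m with
    | zero => simp
    | succ m ih =>
      rw [Finset.sum_range_succ, ih, hWdef]
      have hun : Set.Ioc (0:ℝ) (m * τ) ∪ Set.Ioc ((m:ℝ) * τ) ((m:ℝ) * τ + τ)
          = Set.Ioc (0:ℝ) (((m:ℕ)+1 : ℕ) * τ) := by
        rw [Set.Ioc_union_Ioc_eq_Ioc (by positivity) (by nlinarith)]
        congr 1
        push_cast
        ring
      rw [← hun, lintegral_union measurableSet_Ioc (Set.Ioc_disjoint_Ioc_of_le le_rfl)]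
  have hsumle : ∑ k ∈ Finset.range n, W k ≤ ENNReal.ofReal (‖x‖ ^ p) := by
    rw [hsum n]
    calc ∫⁻ r in Set.Ioc (0:ℝ) (n * τ), G r
        ≤ ∫⁻ r in Set.Ioi (0:ℝ), G r :=
          lintegral_mono_set Set.Ioc_subset_Ioi_self
      _ = ∫⁻ r in Set.Ioi (0:ℝ), ENNReal.ofReal (‖C (T r x)‖ ^ p) := by
          apply setLIntegral_congr_fun_ae measurableSet_Ioi
          filter_upwards with r hr
          simp [hGdef, max_eq_left (le_of_lt (Set.mem_Ioi.mp hr))]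
      _ ≤ ENNReal.ofReal (‖x‖ ^ p) := hintC x
  -- pigeonhole: some window is small
  obtain ⟨k, hkn, hWk⟩ :
      ∃ k, k < n ∧ W k ≤ ENNReal.ofReal (‖x‖ ^ p) / n := by
    by_contra h
    push_neg at h
    have hlt : ∑ k ∈ Finset.range n, (ENNReal.ofReal (‖x‖ ^ p) / n)
        < ∑ k ∈ Finset.range n, W k := by
      apply ENNReal.sum_lt_sum_of_nonempty (Finset.nonempty_range_iff.mpr hnpos.ne')
      intro k hk
      exact h k (Finset.mem_range.mp hk)
    rw [Finset.sum_const, Finset.card_range, nsmul_eq_mul,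
      ENNReal.mul_div_cancel (by exact_mod_cast hnpos.ne') (ENNReal.natCast_ne_top n)] at hlt
    exact absurd hsumle (not_le.mpr hlt)
  have hkτ : (0:ℝ) ≤ (k:ℝ) * τ := by positivity
  set y : X := T ((k:ℝ) * τ) x with hy
  -- translation: W k as an integral over (0, τ]
  have htrans : W k = ∫⁻ r in Set.Ioc (0:ℝ) τ, G (r + (k:ℝ) * τ) := by
    have hmp := (measurePreserving_add_right (volume : Measure ℝ) ((k:ℝ) * τ)).map_eq
    show (∫⁻ r in Set.Ioc ((k:ℝ) * τ) ((k:ℝ) * τ + τ), G r) = _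
    conv_lhs => rw [← hmp]
    rw [setLIntegral_map measurableSet_Ioc hGmeas (measurable_add_const _)]
    congr 1
    rw [Set.preimage_add_const_Ioc]
    congr 1 <;> ring
  -- observability inequality, translated
  have hobs' : ENNReal.ofReal (‖Q y‖ ^ p)
      ≤ ENNReal.ofReal K * ∫⁻ r in Set.Ioc (0:ℝ) τ, G (r + (k:ℝ) * τ) := by
    have hcontf : ContinuousOn (fun r : ℝ => ‖C (T r y)‖ ^ p) (Set.Icc 0 τ) := by
      apply ContinuousOn.rpow_const
      · exact (C.continuous.comp_continuousOn
          ((hTcont y).mono (Set.Icc_subset_Ici_self))).norm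
      · exact fun _ _ => Or.inr hp0.le
    have hint : IntegrableOn (fun r : ℝ => ‖C (T r y)‖ ^ p) (Set.Ioc 0 τ) :=
      (hcontf.integrableOn_Icc).mono_set Set.Ioc_subset_Icc_self
    have hnonneg : 0 ≤ᵐ[volume.restrict (Set.Ioc (0:ℝ) τ)]
        fun r : ℝ => ‖C (T r y)‖ ^ p := by
      filter_upwards with r
      exact Real.rpow_nonneg (norm_nonneg _) p
    have h1 : ENNReal.ofReal (∫ r in Set.Ioc (0:ℝ) τ, ‖C (T r y)‖ ^ p)
        = ∫⁻ r in Set.Ioc (0:ℝ) τ, ENNReal.ofReal (‖C (T r y)‖ ^ p) :=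
      ofReal_integral_eq_lintegral_ofReal hint hnonneg
    have h2 : (∫⁻ r in Set.Ioc (0:ℝ) τ, ENNReal.ofReal (‖C (T r y)‖ ^ p))
        = ∫⁻ r in Set.Ioc (0:ℝ) τ, G (r + (k:ℝ) * τ) := by
      apply setLIntegral_congr_fun_ae measurableSet_Ioc
      filter_upwards with r hr
      have hr0 : (0:ℝ) < r := hr.1
      have hmax : max (r + (k:ℝ) * τ) 0 = r + (k:ℝ) * τ := max_eq_left (by nlinarith)
      have hTr : T r y = T (max (r + (k:ℝ) * τ) 0) x := by
        rw [hmax, hy, hTadd r _ hr0.le hkτ]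
        simp
      simp [hGdef, hTr]
    have h0 := hobs y
    rw [intervalIntegral.integral_of_le hτ.le] at h0
    calc ENNReal.ofReal (‖Q y‖ ^ p)
        ≤ ENNReal.ofReal (K * ∫ r in Set.Ioc (0:ℝ) τ, ‖C (T r y)‖ ^ p) :=
          ENNReal.ofReal_le_ofReal h0
      _ = ENNReal.ofReal K * ENNReal.ofReal (∫ r in Set.Ioc (0:ℝ) τ, ‖C (T r y)‖ ^ p) :=
          ENNReal.ofReal_mul hK.le
      _ = ENNReal.ofReal K * ∫⁻ r in Set.Ioc (0:ℝ) τ, G (r + (k:ℝ) * τ) := by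
          rw [h1, h2]
  -- combine: real inequality for ‖Q y‖^p
  have hQy : ‖Q y‖ ^ p ≤ K * (‖x‖ ^ p / n) := by
    have hchain : ENNReal.ofReal (‖Q y‖ ^ p) ≤ ENNReal.ofReal (K * (‖x‖ ^ p / n)) := by
      calc ENNReal.ofReal (‖Q y‖ ^ p)
          ≤ ENNReal.ofReal K * W k := by rw [htrans]; exact hobs'
        _ ≤ ENNReal.ofReal K * (ENNReal.ofReal (‖x‖ ^ p) / n) :=
            mul_le_mul_right hWk _
        _ = ENNReal.ofReal (K * (‖x‖ ^ p / n)) := by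
            rw [ENNReal.ofReal_mul hK.le, ENNReal.ofReal_div_of_pos hnRpos,
              ENNReal.ofReal_natCast]
    exact (ENNReal.ofReal_le_ofReal_iff (by positivity)).mp hchain
  have hQy2 : ‖Q y‖ ^ p ≤ K * τ * ‖x‖ ^ p / t := by
    have h1 : ‖x‖ ^ p / (n:ℝ) ≤ τ * ‖x‖ ^ p / t := by
      rw [div_le_div_iff₀ hnRpos ht]
      have hxp : (0:ℝ) ≤ ‖x‖ ^ p := Real.rpow_nonneg (norm_nonneg _) p
      have : t ≤ (n:ℝ) * τ := by
        have := (div_lt_iff₀ hτ).mp hnR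
        nlinarith
      nlinarith
    calc ‖Q y‖ ^ p ≤ K * (‖x‖ ^ p / n) := hQy
      _ ≤ K * (τ * ‖x‖ ^ p / t) := by nlinarith
      _ = K * τ * ‖x‖ ^ p / t := by ring
  -- semigroup step: ‖T t (Q x)‖ ≤ M ‖Q y‖
  have hstep : ‖T t (Q x)‖ ≤ M * ‖Q y‖ := by
    have hts : 0 ≤ t - (k:ℝ) * τ := sub_nonneg.mpr (hkt k hkn)
    have hsplit : T t (Q x) = T (t - (k:ℝ) * τ) (Q y) := by
      have h1 : T t = T (t - (k:ℝ) * τ) ∘L T ((k:ℝ) * τ) := by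
        rw [← hTadd _ _ hts hkτ]
        congr 1
        ring
      have h2 : T ((k:ℝ) * τ) (Q x) = Q y := by
        have := congrArg (fun A : X →L[ℂ] X => A x) (hQ ((k:ℝ) * τ) hkτ)
        simpa [hy] using this
      rw [h1]
      simp only [ContinuousLinearMap.coe_comp', Function.comp_apply, h2]
    rw [hsplit]
    calc ‖T (t - (k:ℝ) * τ) (Q y)‖ ≤ ‖T (t - (k:ℝ) * τ)‖ * ‖Q y‖ :=
          (T _).le_opNorm _
      _ ≤ M * ‖Q y‖ := by
          have := hTbdd _ hts
          nlinarith [norm_nonneg (Q y)]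
  -- final rpow algebra
  have hfinal : ‖T t (Q x)‖ ≤ (K * τ) ^ (1/p) * M * t ^ (-(1/p)) * ‖x‖ := by
    have ha : (0:ℝ) ≤ ‖T t (Q x)‖ := norm_nonneg _
    have hap : ‖T t (Q x)‖ ^ p ≤ M ^ p * (K * τ * ‖x‖ ^ p / t) := by
      calc ‖T t (Q x)‖ ^ p ≤ (M * ‖Q y‖) ^ p :=
            Real.rpow_le_rpow ha hstep hp0.le
        _ = M ^ p * ‖Q y‖ ^ p := Real.mul_rpow hM0.le (norm_nonneg _)
        _ ≤ M ^ p * (K * τ * ‖x‖ ^ p / t) := by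
            have hMp : (0:ℝ) < M ^ p := Real.rpow_pos_of_pos hM0 p
            nlinarith
    have h3 : ‖T t (Q x)‖ = (‖T t (Q x)‖ ^ p) ^ (1/p) := by
      rw [← Real.rpow_mul ha, mul_one_div_cancel hp0.ne', Real.rpow_one]
    rw [h3]
    calc (‖T t (Q x)‖ ^ p) ^ (1/p) ≤ (M ^ p * (K * τ * ‖x‖ ^ p / t)) ^ (1/p) :=
          Real.rpow_le_rpow (Real.rpow_nonneg ha p) hap (by positivity)
      _ = (K * τ) ^ (1/p) * M * t ^ (-(1/p)) * ‖x‖ := by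
          have hxp : (0:ℝ) ≤ ‖x‖ ^ p := Real.rpow_nonneg (norm_nonneg _) p
          have e1 : M ^ p * (K * τ * ‖x‖ ^ p / t)
              = (M ^ p) * ((K * τ) * (‖x‖ ^ p * t⁻¹)) := by ring
          rw [e1, Real.mul_rpow (by positivity) (by positivity),
            Real.mul_rpow (by positivity) (by positivity),
            Real.mul_rpow hxp (by positivity),
            ← Real.rpow_mul hM0.le, mul_one_div_cancel hp0.ne', Real.rpow_one,
            ← Real.rpow_mul (norm_nonneg x), mul_one_div_cancel hp0.ne', Real.rpow_one,
            ← Real.rpow_neg_one t, ← Real.rpow_mul ht.le]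
          ring_nf
  calc ‖T t (Q x)‖ ≤ (K * τ) ^ (1/p) * M * t ^ (-(1/p)) * ‖x‖ := hfinal
    _ ≤ (K * τ) ^ (1/p) * M ^ 2 * t ^ (-(1/p)) * ‖x‖ := by
        have hM2 : M ≤ M ^ 2 := by nlinarith
        have h1 : (0:ℝ) ≤ (K * τ) ^ (1/p) := Real.rpow_nonneg (by positivity) _
        have h2 : (0:ℝ) ≤ t ^ (-(1/p)) := Real.rpow_nonneg ht.le _
        have h3 : (0:ℝ) ≤ ‖x‖ := norm_nonneg _
        nlinarith [mul_nonneg (mul_nonneg h1 h2) h3]
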